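/- In the uniform model of configurations of t pebbles on the n vertices of F_{m,n} with t ≤ n/2, the expected value of A = ∑_{j=m+1}^{n} ⌊C(v_j)/2⌋ satisfies E[A] ≤ 2(n−m)·(t/n)², hence E[A] ≤ 2t²/n. -/

import Mathlib

open Finset

private lemma fuse_step (n t s : ℕ) (hn : 1 ≤ n) (hs : 1 ≤ s) (hst : s ≤ t) :
    n * (n + (s - 1) - 1).choose (s - 1) ≤ t * (n + s - 1).choose s := by
  have ha : n + s - 1 = (n + s - 2) + 1 := by omega
  have hb : n + (s - 1) - 1 = n + s - 2 := by omega
  have hid := Nat.add_one_mul_choose_eq (n + s - 2) (s - 1)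
  have hs1 : s - 1 + 1 = s := by omega
  simp only [Nat.succ_eq_add_one, hs1] at hid
  calc n * (n + (s - 1) - 1).choose (s - 1)
      ≤ (n + s - 1) * (n + (s - 1) - 1).choose (s - 1) :=
        Nat.mul_le_mul_right _ (by omega)
    _ = s * (n + s - 1).choose s := by
        rw [hb, ha]
        simpa [Nat.succ_eq_add_one, Nat.mul_comm] using hid
    _ ≤ t * (n + s - 1).choose s := Nat.mul_le_mul_right _ hst

private lemma fuse_ratio (n t : ℕ) (hn : 1 ≤ n) : ∀ k ≤ t,
    (n + (t - k) - 1).choose (t - k) * n ^ k ≤ t ^ k * (n + t - 1).choose t := by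
  intro k
  induction k with
  | zero => simp
  | succ k ih =>
    intro hk
    have hk' : k ≤ t := by omega
    have h1 := ih hk'
    have h2 := fuse_step n t (t - k) hn (by omega) (by omega)
    have h3 : t - (k + 1) = (t - k) - 1 := by omega
    calc (n + (t - (k + 1)) - 1).choose (t - (k + 1)) * n ^ (k + 1)
        = (n * (n + ((t - k) - 1) - 1).choose ((t - k) - 1)) * n ^ k := by rw [h3]; ring
      _ ≤ (t * (n + (t - k) - 1).choose (t - k)) * n ^ k := Nat.mul_le_mul_right _ h2
      _ = t * ((n + (t - k) - 1).choose (t - k) * n ^ k) := by ring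
      _ ≤ t * (t ^ k * (n + t - 1).choose t) := Nat.mul_le_mul_left _ h1
      _ = t ^ (k + 1) * (n + t - 1).choose t := by ring

private lemma fuse_card (n t j : ℕ) (v : Fin n) (hj : j ≤ t) :
    (univ.filter (fun C : Sym (Fin n) t =>
        j ≤ Multiset.count v (C : Multiset (Fin n)))).card
      = (n + (t - j) - 1).choose (t - j) := by
  have h := Sym.card_sym_eq_choose (α := Fin n) (t - j)
  rw [Fintype.card_fin] at h
  rw [← h, ← Finset.card_univ]
  refine Finset.card_bij'
    (fun C hC => (⟨(C : Multiset (Fin n)) - Multiset.replicate j v, by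
      have hC' : j ≤ Multiset.count v (C : Multiset (Fin n)) := by
        simpa using hC
      have hle : Multiset.replicate j v ≤ (C : Multiset (Fin n)) :=
        Multiset.le_count_iff_replicate_le.mp hC'
      rw [Multiset.card_sub hle, Multiset.card_replicate, Sym.card_coe]⟩ : Sym (Fin n) (t - j)))
    (fun B _ => (⟨(B : Multiset (Fin n)) + Multiset.replicate j v, by
      rw [Multiset.card_add, Multiset.card_replicate, Sym.card_coe]; omega⟩ : Sym (Fin n) t))
    ?_ ?_ ?_ ?_
  · intro C hC
    exact Finset.mem_univ _
  · intro B hB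
    refine Finset.mem_filter.mpr ⟨Finset.mem_univ _, ?_⟩
    show j ≤ Multiset.count v ((B : Multiset (Fin n)) + Multiset.replicate j v)
    rw [Multiset.count_add, Multiset.count_replicate_self]
    omega
  · intro C hC
    have hC' : j ≤ Multiset.count v (C : Multiset (Fin n)) := by simpa using hC
    have hle : Multiset.replicate j v ≤ (C : Multiset (Fin n)) :=
      Multiset.le_count_iff_replicate_le.mp hC'
    exact Subtype.ext (tsub_add_cancel_of_le hle)
  · intro B hB
    exact Subtype.ext (add_tsub_cancel_right _ _)

private lemma fuse_sum (n t : ℕ) (v : Fin n) :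
    ∑ C : Sym (Fin n) t, Multiset.count v (C : Multiset (Fin n)) / 2
      = ∑ i ∈ range t, (univ.filter (fun C : Sym (Fin n) t =>
          2 * (i + 1) ≤ Multiset.count v (C : Multiset (Fin n)))).card := by
  have key : ∀ C : Sym (Fin n) t, Multiset.count v (C : Multiset (Fin n)) / 2
      = ∑ i ∈ range t,
          if 2 * (i + 1) ≤ Multiset.count v (C : Multiset (Fin n)) then 1 else 0 := by
    intro C
    have hc : Multiset.count v (C : Multiset (Fin n)) ≤ t := by
      have h1 := Multiset.count_le_card v (C : Multiset (Fin n))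
      rwa [Sym.card_coe] at h1
    rw [← Finset.card_filter]
    have : (range t).filter (fun i => 2 * (i + 1) ≤ Multiset.count v (C : Multiset (Fin n)))
        = range (Multiset.count v (C : Multiset (Fin n)) / 2) := by
      ext i
      simp only [Finset.mem_filter, Finset.mem_range]
      omega
    rw [this, Finset.card_range]
  simp_rw [key]
  rw [Finset.sum_comm]
  congr 1
  ext i
  rw [Finset.card_filter]

private lemma fuse_geom (t : ℕ) : ∑ i ∈ range t, ((1 : ℚ) / 4) ^ i ≤ 2 := by
  rw [geom_sum_eq (by norm_num)]
  have h4 : (0 : ℚ) ≤ (1 / 4 : ℚ) ^ t := by positivity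
  rw [div_le_iff_of_neg (by norm_num)]
  linarith

private lemma fuse_vertex (n t : ℕ) (hn : 1 ≤ n) (ht : 2 * t ≤ n) (v : Fin n) :
    ((∑ C : Sym (Fin n) t, Multiset.count v (C : Multiset (Fin n)) / 2 : ℕ) : ℚ)
      ≤ 2 * ((t : ℚ) / n) ^ 2 * ((n + t - 1).choose t : ℚ) := by
  have hn0 : (0 : ℚ) < n := by exact_mod_cast hn
  have htn : (t : ℚ) / n ≤ 1 / 2 := by
    rw [div_le_div_iff₀ hn0 (by norm_num)]
    exact_mod_cast by omega
  have htn0 : (0 : ℚ) ≤ (t : ℚ) / n := by positivity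
  rw [fuse_sum]
  push_cast
  have hterm : ∀ i ∈ range t,
      (((univ.filter (fun C : Sym (Fin n) t =>
          2 * (i + 1) ≤ Multiset.count v (C : Multiset (Fin n)))).card : ℕ) : ℚ)
        ≤ ((t : ℚ) / n) ^ 2 * (1 / 4) ^ i * ((n + t - 1).choose t : ℚ) := by
    intro i _
    by_cases hit : 2 * (i + 1) ≤ t
    · rw [fuse_card n t (2 * (i + 1)) v hit]
      have hr := fuse_ratio n t hn (2 * (i + 1)) hit
      have hrq : ((n + (t - 2 * (i + 1)) - 1).choose (t - 2 * (i + 1)) : ℚ) * (n : ℚ) ^ (2 * (i + 1))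
          ≤ (t : ℚ) ^ (2 * (i + 1)) * ((n + t - 1).choose t : ℚ) := by exact_mod_cast hr
      have hnp : (0 : ℚ) < (n : ℚ) ^ (2 * (i + 1)) := by positivity
      have step1 : ((n + (t - 2 * (i + 1)) - 1).choose (t - 2 * (i + 1)) : ℚ)
          ≤ ((t : ℚ) / n) ^ (2 * (i + 1)) * ((n + t - 1).choose t : ℚ) := by
        rw [div_pow]
        rw [← le_div_iff₀ hnp] at hrq
        calc ((n + (t - 2 * (i + 1)) - 1).choose (t - 2 * (i + 1)) : ℚ)
            ≤ (t : ℚ) ^ (2 * (i + 1)) * ((n + t - 1).choose t : ℚ) / (n : ℚ) ^ (2 * (i + 1)) := hrq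
          _ = (t : ℚ) ^ (2 * (i + 1)) / (n : ℚ) ^ (2 * (i + 1)) * ((n + t - 1).choose t : ℚ) := by
              ring
      refine step1.trans ?_
      have hNp : (0 : ℚ) ≤ ((n + t - 1).choose t : ℚ) := by positivity
      have hpow : ((t : ℚ) / n) ^ (2 * (i + 1)) ≤ ((t : ℚ) / n) ^ 2 * (1 / 4) ^ i := by
        have : ((t : ℚ) / n) ^ (2 * (i + 1)) = ((t : ℚ) / n) ^ 2 * (((t : ℚ) / n) ^ 2) ^ i := by
          rw [← pow_mul]; ring_nf
        rw [this]
        have h2 : ((t : ℚ) / n) ^ 2 ≤ 1 / 4 := by nlinarith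
        have h3 : (((t : ℚ) / n) ^ 2) ^ i ≤ (1 / 4 : ℚ) ^ i :=
          pow_le_pow_left₀ (by positivity) h2 i
        have h4 : (0 : ℚ) ≤ ((t : ℚ) / n) ^ 2 := by positivity
        nlinarith [pow_nonneg (by positivity : (0:ℚ) ≤ ((t : ℚ) / n) ^ 2) i]
      nlinarith
    · have : (univ.filter (fun C : Sym (Fin n) t =>
          2 * (i + 1) ≤ Multiset.count v (C : Multiset (Fin n)))) = ∅ := by
        apply Finset.filter_false_of_mem
        intro C _
        have hc : Multiset.count v (C : Multiset (Fin n)) ≤ t := by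
          have h1 := Multiset.count_le_card v (C : Multiset (Fin n))
          rwa [Sym.card_coe] at h1
        omega
      rw [this]
      simp only [Finset.card_empty, Nat.cast_zero]
      positivity
  calc (∑ i ∈ range t,
        (((univ.filter (fun C : Sym (Fin n) t =>
            2 * (i + 1) ≤ Multiset.count v (C : Multiset (Fin n)))).card : ℕ) : ℚ))
      ≤ ∑ i ∈ range t, ((t : ℚ) / n) ^ 2 * (1 / 4) ^ i * ((n + t - 1).choose t : ℚ) :=
        Finset.sum_le_sum hterm
    _ = ((t : ℚ) / n) ^ 2 * ((n + t - 1).choose t : ℚ) * ∑ i ∈ range t, ((1 : ℚ) / 4) ^ i := by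
        rw [Finset.mul_sum]
        apply Finset.sum_congr rfl
        intro i _
        ring
    _ ≤ ((t : ℚ) / n) ^ 2 * ((n + t - 1).choose t : ℚ) * 2 := by
        have := fuse_geom t
        have h0 : (0 : ℚ) ≤ ((t : ℚ) / n) ^ 2 * ((n + t - 1).choose t : ℚ) := by positivity
        nlinarith
    _ = 2 * ((t : ℚ) / n) ^ 2 * ((n + t - 1).choose t : ℚ) := by ring

/-- In the uniform model of configurations of `t` pebbles on the `n` vertices
of the fuse graph `F_{m,n}` (pendant vertices are those with index `≥ m`, 0-indexed), with
`t ≤ n/2`, the expectation of `A = ∑_{j=m+1}^n ⌊C(v_j)/2⌋` satisfies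
`E[A] ≤ 2(n−m)·(t/n)²`, and hence `E[A] ≤ 2t²/n`. -/
theorem stmt14 (n m t : ℕ) (hm : 1 ≤ m) (hmn : m ≤ n) (ht : 2 * t ≤ n) :
    ((∑ C : Sym (Fin n) t,
        ((∑ v ∈ Finset.univ.filter (fun v : Fin n => m ≤ v.val),
            Multiset.count v (C : Multiset (Fin n)) / 2 : ℕ) : ℚ))
        / ((n + t - 1).choose t : ℚ)
      ≤ 2 * ((n : ℚ) - m) * ((t : ℚ) / n) ^ 2)
    ∧ ((∑ C : Sym (Fin n) t,
        ((∑ v ∈ Finset.univ.filter (fun v : Fin n => m ≤ v.val),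
            Multiset.count v (C : Multiset (Fin n)) / 2 : ℕ) : ℚ))
        / ((n + t - 1).choose t : ℚ)
      ≤ 2 * (t : ℚ) ^ 2 / n) := by
  have hn : 1 ≤ n := le_trans hm hmn
  have hn0 : (0 : ℚ) < n := by exact_mod_cast hn
  have hN : 0 < (n + t - 1).choose t := Nat.choose_pos (by omega)
  have hNq : (0 : ℚ) < ((n + t - 1).choose t : ℚ) := by exact_mod_cast hN
  have hswap : (∑ C : Sym (Fin n) t,
        ((∑ v ∈ Finset.univ.filter (fun v : Fin n => m ≤ v.val),
            Multiset.count v (C : Multiset (Fin n)) / 2 : ℕ) : ℚ))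
      = ∑ v ∈ Finset.univ.filter (fun v : Fin n => m ≤ v.val),
          ((∑ C : Sym (Fin n) t, Multiset.count v (C : Multiset (Fin n)) / 2 : ℕ) : ℚ) := by
    push_cast
    exact Finset.sum_comm
  have hcard : (Finset.univ.filter (fun v : Fin n => m ≤ v.val)).card = n - m := by
    rw [Finset.card_filter]
    rw [Fin.sum_univ_eq_sum_range (fun i => if m ≤ i then 1 else 0)]
    rw [← Finset.card_filter]
    have : (range n).filter (fun i => m ≤ i) = Finset.Ico m n := by
      ext i
      simp only [Finset.mem_filter, Finset.mem_range, Finset.mem_Ico]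
      omega
    rw [this, Nat.card_Ico]
  have hbound : (∑ C : Sym (Fin n) t,
        ((∑ v ∈ Finset.univ.filter (fun v : Fin n => m ≤ v.val),
            Multiset.count v (C : Multiset (Fin n)) / 2 : ℕ) : ℚ))
      ≤ ((n : ℚ) - m) * (2 * ((t : ℚ) / n) ^ 2 * ((n + t - 1).choose t : ℚ)) := by
    rw [hswap]
    calc (∑ v ∈ Finset.univ.filter (fun v : Fin n => m ≤ v.val),
          ((∑ C : Sym (Fin n) t, Multiset.count v (C : Multiset (Fin n)) / 2 : ℕ) : ℚ))
        ≤ ∑ v ∈ Finset.univ.filter (fun v : Fin n => m ≤ v.val),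
            2 * ((t : ℚ) / n) ^ 2 * ((n + t - 1).choose t : ℚ) :=
          Finset.sum_le_sum (fun v _ => fuse_vertex n t hn ht v)
      _ = ((n - m : ℕ) : ℚ) * (2 * ((t : ℚ) / n) ^ 2 * ((n + t - 1).choose t : ℚ)) := by
          rw [Finset.sum_const, hcard, nsmul_eq_mul]
      _ = ((n : ℚ) - m) * (2 * ((t : ℚ) / n) ^ 2 * ((n + t - 1).choose t : ℚ)) := by
          rw [Nat.cast_sub hmn]
  have goal1 : (∑ C : Sym (Fin n) t,
        ((∑ v ∈ Finset.univ.filter (fun v : Fin n => m ≤ v.val),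
            Multiset.count v (C : Multiset (Fin n)) / 2 : ℕ) : ℚ))
        / ((n + t - 1).choose t : ℚ)
      ≤ 2 * ((n : ℚ) - m) * ((t : ℚ) / n) ^ 2 := by
    rw [div_le_iff₀ hNq]
    calc _ ≤ ((n : ℚ) - m) * (2 * ((t : ℚ) / n) ^ 2 * ((n + t - 1).choose t : ℚ)) := hbound
      _ = 2 * ((n : ℚ) - m) * ((t : ℚ) / n) ^ 2 * ((n + t - 1).choose t : ℚ) := by ring
  refine ⟨goal1, goal1.trans ?_⟩
  have hmm : (m : ℚ) ≥ 0 := by positivity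
  have h1 : 2 * ((n : ℚ) - m) * ((t : ℚ) / n) ^ 2 ≤ 2 * (n : ℚ) * ((t : ℚ) / n) ^ 2 := by
    have hp : (0 : ℚ) ≤ ((t : ℚ) / n) ^ 2 := by positivity
    nlinarith
  refine h1.trans (le_of_eq ?_)
  field_simp
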